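/- Let q ∈ (0,1), Δ² > 0, σ² > 0, and let π := q·δ_0 + (1−q)·N(0, Δ²) be the Gaussian spike and slab measure on ℝ. If (1 + (2q/(1−q))·√(1 + Δ²/σ²)) · Δ²/(σ² + Δ²) < 1, then the function F(u) := G(u, 1/σ²) − u²/(2σ²) is strongly convex on ℝ, i.e. there exists κ > 0 such that u ↦ F(u) − (κ/2)u² is convex on ℝ. -/

import Mathlib

open MeasureTheory ProbabilityTheory Filter Set

/-- The (topological) support of a measure on `ℝ`: points all of whose neighborhoods
have positive measure. -/
def msupp (pr : MeasureTheory.Measure ℝ) : Set ℝ := {x : ℝ | ∀ U ∈ nhds x, pr U ≠ 0}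

/-- The cumulant generating function `c(γ₁, γ₂) = log ∫ exp(γ₁ x - γ₂/2 x²) dπ(x)`. -/
noncomputable def cgf (pr : MeasureTheory.Measure ℝ) (γ₁ γ₂ : ℝ) : ℝ :=
  Real.log (∫ x, Real.exp (γ₁ * x - γ₂ / 2 * x ^ 2) ∂pr)

/-- The exponentially tilted measure `π^{(γ₁, γ₂)}`, with density
`exp(γ₁ x - γ₂/2 x² - c(γ₁,γ₂))` with respect to `π`. -/
noncomputable def tilt (pr : MeasureTheory.Measure ℝ) (γ₁ γ₂ : ℝ) : MeasureTheory.Measure ℝ :=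
  pr.withDensity fun x => ENNReal.ofReal (Real.exp (γ₁ * x - γ₂ / 2 * x ^ 2 - cgf pr γ₁ γ₂))

/-- The mean of the tilted measure `π^{(γ₁, γ₂)}`. -/
noncomputable def tiltMean (pr : MeasureTheory.Measure ℝ) (γ₁ γ₂ : ℝ) : ℝ :=
  ∫ x, x ∂(tilt pr γ₁ γ₂)


section Aux
open Real
open scoped NNReal ENNReal


lemma integrable_base1 (c m : ℝ) (hc : 0 < c) :
    Integrable (fun x : ℝ => Real.exp (-(c * (x - m) ^ 2))) := by
  have h := (integrable_exp_neg_mul_sq hc).comp_sub_right m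
  simpa [neg_mul] using h

lemma base_int (c γ : ℝ) (hc : 0 < c) :
    (∫ x : ℝ, Real.exp (γ * x - c * x ^ 2)) = Real.sqrt (π / c) * Real.exp (γ ^ 2 / (4 * c)) := by
  have key : ∀ x : ℝ, γ * x - c * x ^ 2 = -(c * (x - γ / (2 * c)) ^ 2) + γ ^ 2 / (4 * c) := by
    intro x; field_simp; ring
  calc (∫ x : ℝ, Real.exp (γ * x - c * x ^ 2))
      = ∫ x : ℝ, Real.exp (-(c * (x - γ / (2 * c)) ^ 2)) * Real.exp (γ ^ 2 / (4 * c)) := by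
        congr 1; ext x; rw [key x, Real.exp_add]
    _ = (∫ x : ℝ, Real.exp (-(c * (x - γ / (2 * c)) ^ 2))) * Real.exp (γ ^ 2 / (4 * c)) := by
        rw [integral_mul_const]
    _ = (∫ x : ℝ, Real.exp (-(c * x ^ 2))) * Real.exp (γ ^ 2 / (4 * c)) := by
        rw [integral_sub_right_eq_self (fun x => Real.exp (-(c * x ^ 2))) (γ / (2 * c))]
    _ = Real.sqrt (π / c) * Real.exp (γ ^ 2 / (4 * c)) := by
        rw [show (fun x : ℝ => Real.exp (-(c * x ^ 2))) = fun x : ℝ => Real.exp (-c * x ^ 2) by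
          ext x; ring_nf, integral_gaussian]



lemma odd_int (c : ℝ) (hc : 0 < c) : (∫ x : ℝ, x * Real.exp (-(c * x ^ 2))) = 0 := by
  set f : ℝ → ℝ := fun x => x * Real.exp (-(c * x ^ 2)) with hf
  have h1 : (∫ x : ℝ, f (-x)) = ∫ x : ℝ, f x := integral_neg_eq_self f volume
  have h2 : (fun x : ℝ => f (-x)) = fun x : ℝ => -(f x) := by
    funext x; simp only [hf]; ring_nf
  rw [h2, integral_neg] at h1
  linarith

lemma integrable_base2 (c γ : ℝ) (hc : 0 < c) :
    Integrable (fun x : ℝ => Real.exp (γ * x - c * x ^ 2)) := by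
  have key : ∀ x : ℝ, Real.exp (γ * x - c * x ^ 2)
      = Real.exp (γ ^ 2 / (4 * c)) * Real.exp (-(c * (x - γ / (2 * c)) ^ 2)) := by
    intro x; rw [← Real.exp_add]; congr 1; field_simp; ring
  have h := (((integrable_exp_neg_mul_sq hc).comp_sub_right (γ / (2 * c))).const_mul
    (Real.exp (γ ^ 2 / (4 * c))))
  refine h.congr ?_
  filter_upwards with x
  rw [key x]; ring_nf

lemma integrable_base3 (c γ : ℝ) (hc : 0 < c) :
    Integrable (fun x : ℝ => x * Real.exp (γ * x - c * x ^ 2)) := by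
  set m := γ / (2 * c) with hm
  set G : ℝ → ℝ := fun y => Real.exp (γ ^ 2 / (4 * c)) * ((y + m) * Real.exp (-(c * y ^ 2)))
    with hG
  have hGi : Integrable G := by
    have h1 : Integrable (fun y : ℝ => y * Real.exp (-(c * y ^ 2))) := by
      simpa [neg_mul] using integrable_mul_exp_neg_mul_sq hc
    have h2 : Integrable (fun y : ℝ => m * Real.exp (-(c * y ^ 2))) := by
      simpa [neg_mul] using (integrable_exp_neg_mul_sq hc).const_mul m
    have h3 := (h1.add h2).const_mul (Real.exp (γ ^ 2 / (4 * c)))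
    refine h3.congr ?_
    filter_upwards with y
    simp only [hG, Pi.add_apply]; ring
  have h := hGi.comp_sub_right m
  refine h.congr ?_
  filter_upwards with x
  have hkey : γ * x - c * x ^ 2 = γ ^ 2 / (4 * c) + (-(c * (x - m) ^ 2)) := by
    rw [hm]; field_simp; ring
  simp only [hG]
  rw [hkey, Real.exp_add]; ring

lemma base_int_x (c γ : ℝ) (hc : 0 < c) :
    (∫ x : ℝ, x * Real.exp (γ * x - c * x ^ 2))
      = Real.sqrt (π / c) * (γ / (2 * c)) * Real.exp (γ ^ 2 / (4 * c)) := by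
  set m := γ / (2 * c) with hm
  set G : ℝ → ℝ := fun y => Real.exp (γ ^ 2 / (4 * c)) * ((y + m) * Real.exp (-(c * y ^ 2)))
    with hG
  have key : (fun x : ℝ => x * Real.exp (γ * x - c * x ^ 2)) = fun x : ℝ => G (x - m) := by
    funext x
    have hkey : γ * x - c * x ^ 2 = γ ^ 2 / (4 * c) + (-(c * (x - m) ^ 2)) := by
      rw [hm]; field_simp; ring
    simp only [hG]
    rw [hkey, Real.exp_add]; ring
  rw [key, integral_sub_right_eq_self G m]
  have h1 : Integrable (fun y : ℝ => y * Real.exp (-(c * y ^ 2))) := by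
    simpa [neg_mul] using integrable_mul_exp_neg_mul_sq hc
  have h2 : Integrable (fun y : ℝ => m * Real.exp (-(c * y ^ 2))) := by
    simpa [neg_mul] using (integrable_exp_neg_mul_sq hc).const_mul m
  have hsplit : (fun y : ℝ => (y + m) * Real.exp (-(c * y ^ 2)))
      = fun y : ℝ => y * Real.exp (-(c * y ^ 2)) + m * Real.exp (-(c * y ^ 2)) := by
    funext y; ring
  simp only [hG]
  rw [integral_const_mul, hsplit, integral_add h1 h2, odd_int c hc, integral_const_mul]
  rw [show (fun y : ℝ => Real.exp (-(c * y ^ 2))) = fun y : ℝ => Real.exp (-c * y ^ 2) by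
    funext y; ring_nf, integral_gaussian]
  ring


lemma integral_withDensity_ofReal {μ : Measure ℝ} {ρ : ℝ → ℝ} (hρ : Measurable ρ)
    (hρ0 : ∀ x, 0 ≤ ρ x) (g : ℝ → ℝ) :
    ∫ x, g x ∂(μ.withDensity fun x => ENNReal.ofReal (ρ x)) = ∫ x, ρ x * g x ∂μ := by
  have h : (fun x => ENNReal.ofReal (ρ x)) = fun x => ((ρ x).toNNReal : ℝ≥0∞) := rfl
  rw [h, integral_withDensity_eq_integral_smul hρ.real_toNNReal g]
  congr 1
  funext x
  rw [NNReal.smul_def, Real.coe_toNNReal _ (hρ0 x), smul_eq_mul]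

lemma integrable_withDensity_ofReal {μ : Measure ℝ} {ρ : ℝ → ℝ} (hρ : Measurable ρ)
    (hρ0 : ∀ x, 0 ≤ ρ x) (g : ℝ → ℝ) :
    Integrable g (μ.withDensity fun x => ENNReal.ofReal (ρ x))
      ↔ Integrable (fun x => ρ x * g x) μ := by
  have h : (fun x => ENNReal.ofReal (ρ x)) = fun x => ((ρ x).toNNReal : ℝ≥0∞) := rfl
  rw [h, integrable_withDensity_iff_integrable_smul hρ.real_toNNReal]
  constructor <;> intro hi <;> refine hi.congr ?_ <;> filter_upwards with x <;>
    rw [NNReal.smul_def, Real.coe_toNNReal _ (hρ0 x), smul_eq_mul]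

lemma integral_gaussianReal_pdf {V : ℝ≥0} (hV : V ≠ 0) (g : ℝ → ℝ) :
    ∫ x, g x ∂(gaussianReal 0 V) = ∫ x, gaussianPDFReal 0 V x * g x := by
  rw [gaussianReal_of_var_ne_zero _ hV]
  exact integral_withDensity_ofReal (measurable_gaussianPDFReal 0 V)
    (gaussianPDFReal_nonneg 0 V) g

lemma integrable_gaussianReal_pdf {V : ℝ≥0} (hV : V ≠ 0) (g : ℝ → ℝ) :
    Integrable g (gaussianReal 0 V) ↔ Integrable (fun x => gaussianPDFReal 0 V x * g x) := by
  rw [gaussianReal_of_var_ne_zero _ hV]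
  exact integrable_withDensity_ofReal (measurable_gaussianPDFReal 0 V)
    (gaussianPDFReal_nonneg 0 V) g

lemma integrable_dirac' {f : ℝ → ℝ} (hf : Measurable f) (a : ℝ) :
    Integrable f (Measure.dirac a) := by
  refine ⟨hf.aestronglyMeasurable, ?_⟩
  rw [HasFiniteIntegral, lintegral_dirac' a hf.enorm]
  exact ENNReal.coe_lt_top


noncomputable def avar (Δ2 s2 : ℝ) : ℝ := 1 / (2 * Δ2) + 1 / (2 * s2)
noncomputable def vv (Δ2 s2 : ℝ) : ℝ := Δ2 * s2 / (s2 + Δ2)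
noncomputable def AA (Δ2 s2 : ℝ) : ℝ := Real.sqrt (s2 / (s2 + Δ2))

section SS
variable (Δ2 s2 : ℝ)


lemma havar (hΔ2 : 0 < Δ2) (hs2 : 0 < s2) : avar Δ2 s2 = (s2 + Δ2) / (2 * Δ2 * s2) := by
  unfold avar
  have h1 : Δ2 ≠ 0 := ne_of_gt hΔ2
  have h2 : s2 ≠ 0 := ne_of_gt hs2
  field_simp

lemma avar_pos (hΔ2 : 0 < Δ2) (hs2 : 0 < s2) : 0 < avar Δ2 s2 := by
  unfold avar; positivity

lemma vv_pos (hΔ2 : 0 < Δ2) (hs2 : 0 < s2) : 0 < vv Δ2 s2 := by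
  unfold vv; positivity

lemma AA_pos (hΔ2 : 0 < Δ2) (hs2 : 0 < s2) : 0 < AA Δ2 s2 := by
  unfold AA; apply Real.sqrt_pos.2; positivity

lemma pdf_mul (hΔ2 : 0 < Δ2) (hs2 : 0 < s2) (t x : ℝ) :
    gaussianPDFReal 0 Δ2.toNNReal x * Real.exp (t * x - 1 / s2 / 2 * x ^ 2)
      = (Real.sqrt (2 * π * Δ2))⁻¹ * Real.exp (t * x - avar Δ2 s2 * x ^ 2) := by
  rw [gaussianPDFReal, Real.coe_toNNReal Δ2 hΔ2.le, mul_assoc, ← Real.exp_add]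
  congr 2
  rw [havar Δ2 s2 hΔ2 hs2]
  have h1 : Δ2 ≠ 0 := ne_of_gt hΔ2
  have h2 : s2 ≠ 0 := ne_of_gt hs2
  have h3 : s2 + Δ2 ≠ 0 := by positivity
  field_simp
  ring

lemma const_eq (hΔ2 : 0 < Δ2) (hs2 : 0 < s2) : (Real.sqrt (2 * π * Δ2))⁻¹ * Real.sqrt (π / avar Δ2 s2) = AA Δ2 s2 := by
  rw [← Real.sqrt_inv, ← Real.sqrt_mul (by positivity)]
  unfold AA
  rw [havar Δ2 s2 hΔ2 hs2]
  congr 1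
  have hπ : π ≠ 0 := ne_of_gt Real.pi_pos
  have h1 : Δ2 ≠ 0 := ne_of_gt hΔ2
  have h2 : s2 ≠ 0 := ne_of_gt hs2
  have h3 : s2 + Δ2 ≠ 0 := by positivity
  field_simp

lemma exparg_eq (hΔ2 : 0 < Δ2) (hs2 : 0 < s2) (t : ℝ) : t ^ 2 / (4 * avar Δ2 s2) = vv Δ2 s2 * t ^ 2 / 2 := by
  rw [havar Δ2 s2 hΔ2 hs2]
  unfold vv
  have h1 : Δ2 ≠ 0 := ne_of_gt hΔ2
  have h2 : s2 ≠ 0 := ne_of_gt hs2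
  have h3 : s2 + Δ2 ≠ 0 := by positivity
  field_simp
  ring

lemma slope_eq (hΔ2 : 0 < Δ2) (hs2 : 0 < s2) (t : ℝ) : t / (2 * avar Δ2 s2) = vv Δ2 s2 * t := by
  rw [havar Δ2 s2 hΔ2 hs2]
  unfold vv
  have h1 : Δ2 ≠ 0 := ne_of_gt hΔ2
  have h2 : s2 ≠ 0 := ne_of_gt hs2
  have h3 : s2 + Δ2 ≠ 0 := by positivity
  field_simp

lemma toNNReal_ne (hΔ2 : 0 < Δ2) : Δ2.toNNReal ≠ 0 := by
  simp only [ne_eq, Real.toNNReal_eq_zero, not_le]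
  exact hΔ2

lemma gauss_int1 (hΔ2 : 0 < Δ2) (hs2 : 0 < s2) (t : ℝ) :
    ∫ x, Real.exp (t * x - 1 / s2 / 2 * x ^ 2) ∂(gaussianReal 0 Δ2.toNNReal)
      = AA Δ2 s2 * Real.exp (vv Δ2 s2 * t ^ 2 / 2) := by
  rw [integral_gaussianReal_pdf (toNNReal_ne Δ2 hΔ2)]
  have e1 : (fun x => gaussianPDFReal 0 Δ2.toNNReal x * Real.exp (t * x - 1 / s2 / 2 * x ^ 2))
      = fun x => (Real.sqrt (2 * π * Δ2))⁻¹ * Real.exp (t * x - avar Δ2 s2 * x ^ 2) :=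
    funext (pdf_mul Δ2 s2 hΔ2 hs2 t)
  rw [e1, integral_const_mul, base_int _ t (avar_pos Δ2 s2 hΔ2 hs2),
    exparg_eq Δ2 s2 hΔ2 hs2, ← const_eq Δ2 s2 hΔ2 hs2]
  ring

lemma gauss_int2 (hΔ2 : 0 < Δ2) (hs2 : 0 < s2) (t : ℝ) :
    ∫ x, x * Real.exp (t * x - 1 / s2 / 2 * x ^ 2) ∂(gaussianReal 0 Δ2.toNNReal)
      = AA Δ2 s2 * (vv Δ2 s2 * t) * Real.exp (vv Δ2 s2 * t ^ 2 / 2) := by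
  rw [integral_gaussianReal_pdf (toNNReal_ne Δ2 hΔ2)]
  have e1 : (fun x => gaussianPDFReal 0 Δ2.toNNReal x * (x * Real.exp (t * x - 1 / s2 / 2 * x ^ 2)))
      = fun x => (Real.sqrt (2 * π * Δ2))⁻¹ * (x * Real.exp (t * x - avar Δ2 s2 * x ^ 2)) := by
    funext x
    have h := pdf_mul Δ2 s2 hΔ2 hs2 t x
    calc gaussianPDFReal 0 Δ2.toNNReal x * (x * Real.exp (t * x - 1 / s2 / 2 * x ^ 2))
        = (gaussianPDFReal 0 Δ2.toNNReal x * Real.exp (t * x - 1 / s2 / 2 * x ^ 2)) * x := by ring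
      _ = (Real.sqrt (2 * π * Δ2))⁻¹ * (x * Real.exp (t * x - avar Δ2 s2 * x ^ 2)) := by
          rw [h]; ring
  rw [e1, integral_const_mul, base_int_x _ t (avar_pos Δ2 s2 hΔ2 hs2),
    exparg_eq Δ2 s2 hΔ2 hs2, slope_eq Δ2 s2 hΔ2 hs2 t, ← const_eq Δ2 s2 hΔ2 hs2]
  ring

lemma gauss_integrable1 (hΔ2 : 0 < Δ2) (hs2 : 0 < s2) (t : ℝ) :
    Integrable (fun x => Real.exp (t * x - 1 / s2 / 2 * x ^ 2)) (gaussianReal 0 Δ2.toNNReal) := by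
  rw [integrable_gaussianReal_pdf (toNNReal_ne Δ2 hΔ2)]
  have h := (integrable_base2 (avar Δ2 s2) t (avar_pos Δ2 s2 hΔ2 hs2)).const_mul
    (Real.sqrt (2 * π * Δ2))⁻¹
  refine h.congr ?_
  filter_upwards with x
  exact (pdf_mul Δ2 s2 hΔ2 hs2 t x).symm

lemma gauss_integrable2 (hΔ2 : 0 < Δ2) (hs2 : 0 < s2) (t : ℝ) :
    Integrable (fun x => x * Real.exp (t * x - 1 / s2 / 2 * x ^ 2))
      (gaussianReal 0 Δ2.toNNReal) := by
  rw [integrable_gaussianReal_pdf (toNNReal_ne Δ2 hΔ2)]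
  have h := (integrable_base3 (avar Δ2 s2) t (avar_pos Δ2 s2 hΔ2 hs2)).const_mul
    (Real.sqrt (2 * π * Δ2))⁻¹
  refine h.congr ?_
  filter_upwards with x
  have hp := pdf_mul Δ2 s2 hΔ2 hs2 t x
  calc (Real.sqrt (2 * π * Δ2))⁻¹ * (x * Real.exp (t * x - avar Δ2 s2 * x ^ 2))
      = ((Real.sqrt (2 * π * Δ2))⁻¹ * Real.exp (t * x - avar Δ2 s2 * x ^ 2)) * x := by ring
    _ = gaussianPDFReal 0 Δ2.toNNReal x * (x * Real.exp (t * x - 1 / s2 / 2 * x ^ 2)) := by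
        rw [← hp]; ring


end SS

section ANA
variable (p b v : ℝ)


noncomputable def If (t : ℝ) : ℝ := p + b * Real.exp (v * t ^ 2 / 2)
noncomputable def Psi (t : ℝ) : ℝ := Real.log (If p b v t)
noncomputable def Df (t : ℝ) : ℝ := b * (v * t) * Real.exp (v * t ^ 2 / 2) / If p b v t
noncomputable def Sf (t : ℝ) : ℝ :=
  (b * v * Real.exp (v * t ^ 2 / 2) * (1 + v * t ^ 2) * If p b v t
    - b * (v * t) * Real.exp (v * t ^ 2 / 2) * (b * (v * t) * Real.exp (v * t ^ 2 / 2)))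
    / (If p b v t) ^ 2

variable (hp : 0 < p) (hb : 0 < b) (hv : 0 < v)

lemma If_pos (hp : 0 < p) (hb : 0 < b) (t : ℝ) : 0 < If p b v t := by
  unfold If; positivity

lemma hasDerivAt_If (t : ℝ) :
    HasDerivAt (If p b v) (b * (v * t) * Real.exp (v * t ^ 2 / 2)) t := by
  have h1 : HasDerivAt (fun t : ℝ => v * t ^ 2 / 2) (v * t) t := by
    have := ((hasDerivAt_pow 2 t).const_mul v).div_const 2
    simpa using this.congr_deriv (by ring)
  have h2 : HasDerivAt (fun t : ℝ => Real.exp (v * t ^ 2 / 2))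
      (Real.exp (v * t ^ 2 / 2) * (v * t)) t := h1.exp
  have h3 := (h2.const_mul b).const_add p
  exact h3.congr_deriv (by ring)

lemma hasDerivAt_Psi (hp : 0 < p) (hb : 0 < b) (t : ℝ) :
    HasDerivAt (Psi p b v) (Df p b v t) t := by
  have h := (hasDerivAt_If p b v t).log (ne_of_gt (If_pos p b v hp hb t))
  exact h

lemma hasDerivAt_Df (hp : 0 < p) (hb : 0 < b) (t : ℝ) :
    HasDerivAt (Df p b v) (Sf p b v t) t := by
  have h1 : HasDerivAt (fun t : ℝ => v * t ^ 2 / 2) (v * t) t := by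
    have := ((hasDerivAt_pow 2 t).const_mul v).div_const 2
    simpa using this.congr_deriv (by ring)
  have h2 : HasDerivAt (fun t : ℝ => Real.exp (v * t ^ 2 / 2))
      (Real.exp (v * t ^ 2 / 2) * (v * t)) t := h1.exp
  have hN : HasDerivAt (fun t : ℝ => b * (v * t) * Real.exp (v * t ^ 2 / 2))
      (b * v * Real.exp (v * t ^ 2 / 2) * (1 + v * t ^ 2)) t := by
    have ha : HasDerivAt (fun t : ℝ => b * (v * t)) (b * v) t := by
      simpa using ((hasDerivAt_id t).const_mul v).const_mul b
    have := ha.mul h2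
    exact this.congr_deriv (by ring)
  have h := hN.div (hasDerivAt_If p b v t) (ne_of_gt (If_pos p b v hp hb t))
  exact h

lemma Sf_nonneg (hp : 0 < p) (hb : 0 < b) (hv : 0 < v) (t : ℝ) : 0 ≤ Sf p b v t := by
  unfold Sf
  apply div_nonneg _ (sq_nonneg _)
  have hI : If p b v t = p + b * Real.exp (v * t ^ 2 / 2) := rfl
  have hE := Real.exp_pos (v * t ^ 2 / 2)
  rw [hI]
  set E := Real.exp (v * t ^ 2 / 2)
  have hid : b * v * E * (1 + v * t ^ 2) * (p + b * E) - b * (v * t) * E * (b * (v * t) * E)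
      = b * v * E * (p + b * E + p * (v * t ^ 2)) := by ring
  rw [hid]
  positivity

lemma Sf_le (hp : 0 < p) (hb : 0 < b) (hv : 0 < v) (t : ℝ) :
    Sf p b v t ≤ v * (1 + 2 * p / b) := by
  unfold Sf
  rw [div_le_iff₀ (pow_pos (If_pos p b v hp hb t) 2)]
  have hI : If p b v t = p + b * Real.exp (v * t ^ 2 / 2) := rfl
  set E := Real.exp (v * t ^ 2 / 2) with hE
  have hEpos : 0 < E := Real.exp_pos _
  have hElb : 1 + v * t ^ 2 / 2 ≤ E := by
    rw [hE]; have := Real.add_one_le_exp (v * t ^ 2 / 2); linarith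
  rw [hI]
  have hT : 0 ≤ v * t ^ 2 := by positivity
  -- key : v*t^2 ≤ 2*E
  have hkey : v * t ^ 2 ≤ 2 * E := by nlinarith
  have hb' := hb.le
  have hp' := hp.le
  have h2 : b * v * E * (1 + v * t ^ 2) * (p + b * E) - b * (v * t) * E * (b * (v * t) * E)
      = v * (b * E * (p + b * E) + p * (b * E) * (v * t ^ 2)) := by ring
  rw [h2]
  have h3 : p * (b * E) * (v * t ^ 2) ≤ p * (b * E) * (2 * E) :=
    mul_le_mul_of_nonneg_left hkey (by positivity)
  have h4 : v * (b * E * (p + b * E) + p * (b * E) * (v * t ^ 2))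
      ≤ v * (b * E * (p + b * E) + 2 * p * b * E ^ 2) := by nlinarith
  refine le_trans h4 ?_
  have h5 : v * (1 + 2 * p / b) * (p + b * E) ^ 2
      = v * ((b + 2 * p) * (p + b * E) ^ 2) / b := by field_simp
  rw [h5, le_div_iff₀ hb]
  have hid : v * ((b + 2 * p) * (p + b * E) ^ 2)
      - v * (b * E * (p + b * E) + 2 * p * b * E ^ 2) * b
      = v * (b * p ^ 2 + p * b ^ 2 * E + 2 * p ^ 3 + 4 * p ^ 2 * b * E) := by ring
  have hpos : 0 ≤ v * (b * p ^ 2 + p * b ^ 2 * E + 2 * p ^ 3 + 4 * p ^ 2 * b * E) := by positivity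
  linarith


end ANA


lemma mono_of_hasDerivAt {f f' : ℝ → ℝ} (hf : ∀ t, HasDerivAt f (f' t) t)
    (h0 : ∀ t, 0 ≤ f' t) : Monotone f :=
  monotone_of_deriv_nonneg (fun x => (hf x).differentiableAt)
    (fun x => by rw [(hf x).deriv]; exact h0 x)

lemma support_line {f f' : ℝ → ℝ} (hf : ∀ t, HasDerivAt f (f' t) t) (hm : Monotone f')
    (a t : ℝ) : f a + f' a * (t - a) ≤ f t := by
  have hcont : Continuous f := by
    have : Differentiable ℝ f := fun x => (hf x).differentiableAt
    exact this.continuous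
  rcases lt_trichotomy a t with hlt | heq | hgt
  · obtain ⟨c, hc, hceq⟩ := exists_hasDerivAt_eq_slope f f' hlt hcont.continuousOn
      (fun x _ => hf x)
    have h1 : f' a ≤ (f t - f a) / (t - a) := hceq ▸ hm (le_of_lt hc.1)
    rw [le_div_iff₀ (by linarith : (0:ℝ) < t - a)] at h1
    nlinarith [h1]
  · subst heq; simp
  · obtain ⟨c, hc, hceq⟩ := exists_hasDerivAt_eq_slope f f' hgt hcont.continuousOn
      (fun x _ => hf x)
    have h1 : (f a - f t) / (a - t) ≤ f' a := hceq ▸ hm (le_of_lt hc.2)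
    rw [div_le_iff₀ (by linarith : (0:ℝ) < a - t)] at h1
    nlinarith [h1]

set_option maxHeartbeats 1000000 in
lemma main_convex {Ψ D S : ℝ → ℝ} {L : ℝ} (hL : 0 < L)
    (hΨ : ∀ t, HasDerivAt Ψ (D t) t) (hD : ∀ t, HasDerivAt D (S t) t)
    (hS0 : ∀ t, 0 ≤ S t) (hSL : ∀ t, S t ≤ L)
    (h : ℝ → ℝ) (hh : ∀ u, D (h u) = u) :
    ConvexOn ℝ Set.univ (fun u => u * h u - Ψ (h u) - u ^ 2 / (2 * L)) := by
  have hL0 : L ≠ 0 := ne_of_gt hL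
  have hmonoD : Monotone D := mono_of_hasDerivAt hD hS0
  have hφd : ∀ t, HasDerivAt (fun t => L * t ^ 2 / 2 - Ψ t) (L * t - D t) t := by
    intro t
    have h1 : HasDerivAt (fun t : ℝ => L * t ^ 2 / 2) (L * t) t := by
      have := ((hasDerivAt_pow 2 t).const_mul L).div_const 2
      simpa using this.congr_deriv (by ring)
    exact h1.sub (hΨ t)
  have hmonoφ : Monotone (fun t => L * t - D t) := by
    apply mono_of_hasDerivAt (f' := fun t => L - S t)
    · intro t
      have := ((hasDerivAt_id t).const_mul L).sub (hD t)
      exact this.congr_deriv (by ring)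
    · intro t; linarith [hSL t]
  have Leg : ∀ w t : ℝ, w * t - Ψ t ≤ w * h w - Ψ (h w) := by
    intro w t
    have hsl := support_line hΨ hmonoD (h w) t
    rw [hh w] at hsl
    nlinarith [hsl]
  have φline : ∀ a t : ℝ, (L * a ^ 2 / 2 - Ψ a) + (L * a - D a) * (t - a)
      ≤ L * t ^ 2 / 2 - Ψ t := support_line hφd hmonoφ
  have gen : ∀ w t : ℝ, w * t - Ψ t - w ^ 2 / (2 * L)
      = (L * t ^ 2 / 2 - Ψ t) - (w - L * t) ^ 2 / (2 * L) := by
    intro w t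
    field_simp
    ring
  refine ⟨convex_univ, ?_⟩
  intro x _ y _ a b ha hb hab
  simp only [smul_eq_mul]
  obtain ⟨u, hu⟩ : ∃ u : ℝ, u = a * x + b * y := ⟨_, rfl⟩
  rw [← hu]
  obtain ⟨γ, hγ⟩ : ∃ γ : ℝ, γ = h u := ⟨_, rfl⟩
  obtain ⟨γx, hγx⟩ : ∃ g : ℝ, g = γ + (x - u) / L := ⟨_, rfl⟩
  obtain ⟨γy, hγy⟩ : ∃ g : ℝ, g = γ + (y - u) / L := ⟨_, rfl⟩
  have l1 : x * γx - Ψ γx ≤ x * h x - Ψ (h x) := Leg x γx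
  have l2 : y * γy - Ψ γy ≤ y * h y - Ψ (h y) := Leg y γy
  have hLγx : L * γx = L * γ + (x - u) := by rw [hγx]; field_simp
  have hLγy : L * γy = L * γ + (y - u) := by rw [hγy]; field_simp
  have e0 : a * (x - u) + b * (y - u) = 0 := by
    rw [hu]; linear_combination (-(a * x + b * y)) * hab
  have e1 : a * (γx - γ) + b * (γy - γ) = 0 := by
    have e1' : a * (γx - γ) + b * (γy - γ) = (a * (x - u) + b * (y - u)) / L := by
      rw [hγx, hγy]; ring
    rw [e1', e0, zero_div]
  have c1 := φline γ γx
  have c2 := φline γ γy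
  have m1 : a * ((L * γ ^ 2 / 2 - Ψ γ) + (L * γ - D γ) * (γx - γ))
      ≤ a * (L * γx ^ 2 / 2 - Ψ γx) := mul_le_mul_of_nonneg_left c1 ha
  have m2 : b * ((L * γ ^ 2 / 2 - Ψ γ) + (L * γ - D γ) * (γy - γ))
      ≤ b * (L * γy ^ 2 / 2 - Ψ γy) := mul_le_mul_of_nonneg_left c2 hb
  have e1m : (L * γ - D γ) * (a * (γx - γ) + b * (γy - γ)) = 0 := by rw [e1, mul_zero]
  have e2 : a * (L * γ ^ 2 / 2 - Ψ γ) + b * (L * γ ^ 2 / 2 - Ψ γ) = L * γ ^ 2 / 2 - Ψ γ := by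
    linear_combination (L * γ ^ 2 / 2 - Ψ γ) * hab
  have hφcomb : L * γ ^ 2 / 2 - Ψ γ
      ≤ a * (L * γx ^ 2 / 2 - Ψ γx) + b * (L * γy ^ 2 / 2 - Ψ γy) := by
    linarith [m1, m2, e1m, e2]
  have idx : x * γx - Ψ γx - x ^ 2 / (2 * L)
      = (L * γx ^ 2 / 2 - Ψ γx) - (u - L * γ) ^ 2 / (2 * L) := by
    rw [gen x γx]
    have hxe : x - L * γx = u - L * γ := by linarith [hLγx]
    rw [hxe]
  have idy : y * γy - Ψ γy - y ^ 2 / (2 * L)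
      = (L * γy ^ 2 / 2 - Ψ γy) - (u - L * γ) ^ 2 / (2 * L) := by
    rw [gen y γy]
    have hye : y - L * γy = u - L * γ := by linarith [hLγy]
    rw [hye]
  have idu : u * γ - Ψ γ - u ^ 2 / (2 * L)
      = (L * γ ^ 2 / 2 - Ψ γ) - (u - L * γ) ^ 2 / (2 * L) := gen u γ
  have a1 : a * (x * γx - Ψ γx - x ^ 2 / (2 * L))
      ≤ a * (x * h x - Ψ (h x) - x ^ 2 / (2 * L)) :=
    mul_le_mul_of_nonneg_left (by linarith [l1]) ha
  have a2 : b * (y * γy - Ψ γy - y ^ 2 / (2 * L))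
      ≤ b * (y * h y - Ψ (h y) - y ^ 2 / (2 * L)) :=
    mul_le_mul_of_nonneg_left (by linarith [l2]) hb
  rw [idx] at a1
  rw [idy] at a2
  have hsq : a * ((u - L * γ) ^ 2 / (2 * L)) + b * ((u - L * γ) ^ 2 / (2 * L))
      = (u - L * γ) ^ 2 / (2 * L) := by
    linear_combination ((u - L * γ) ^ 2 / (2 * L)) * hab
  have final : u * γ - Ψ γ - u ^ 2 / (2 * L)
      ≤ a * (x * h x - Ψ (h x) - x ^ 2 / (2 * L))
        + b * (y * h y - Ψ (h y) - y ^ 2 / (2 * L)) := by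
    rw [idu]
    linarith [a1, a2, hφcomb, hsq]
  rw [← hγ]
  exact final

section PR

noncomputable def bb (q Δ2 s2 : ℝ) : ℝ := (1 - q) * AA Δ2 s2

lemma meas1 (s2 t : ℝ) : Measurable (fun x : ℝ => Real.exp (t * x - 1 / s2 / 2 * x ^ 2)) := by
  fun_prop

lemma meas2 (s2 t : ℝ) : Measurable (fun x : ℝ => x * Real.exp (t * x - 1 / s2 / 2 * x ^ 2)) := by
  fun_prop

lemma Ipr (q Δ2 s2 : ℝ) (hq : q ∈ Set.Ioo (0:ℝ) 1) (hΔ2 : 0 < Δ2) (hs2 : 0 < s2)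
    (pr : Measure ℝ)
    (hpr : pr = ENNReal.ofReal q • MeasureTheory.Measure.dirac (0 : ℝ) +
      ENNReal.ofReal (1 - q) • ProbabilityTheory.gaussianReal 0 Δ2.toNNReal) (t : ℝ) :
    ∫ x, Real.exp (t * x - 1 / s2 / 2 * x ^ 2) ∂pr
      = q + bb q Δ2 s2 * Real.exp (vv Δ2 s2 * t ^ 2 / 2) := by
  subst hpr
  rw [integral_add_measure
    (((integrable_dirac' (meas1 s2 t) 0)).smul_measure ENNReal.ofReal_ne_top)
    (((gauss_integrable1 Δ2 s2 hΔ2 hs2 t)).smul_measure ENNReal.ofReal_ne_top),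
    integral_smul_measure, integral_smul_measure, integral_dirac,
    gauss_int1 Δ2 s2 hΔ2 hs2 t,
    ENNReal.toReal_ofReal hq.1.le, ENNReal.toReal_ofReal (by linarith [hq.2] : (0:ℝ) ≤ 1 - q)]
  unfold bb
  simp
  ring

lemma Jpr (q Δ2 s2 : ℝ) (hq : q ∈ Set.Ioo (0:ℝ) 1) (hΔ2 : 0 < Δ2) (hs2 : 0 < s2)
    (pr : Measure ℝ)
    (hpr : pr = ENNReal.ofReal q • MeasureTheory.Measure.dirac (0 : ℝ) +
      ENNReal.ofReal (1 - q) • ProbabilityTheory.gaussianReal 0 Δ2.toNNReal) (t : ℝ) :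
    ∫ x, x * Real.exp (t * x - 1 / s2 / 2 * x ^ 2) ∂pr
      = bb q Δ2 s2 * (vv Δ2 s2 * t) * Real.exp (vv Δ2 s2 * t ^ 2 / 2) := by
  subst hpr
  rw [integral_add_measure
    (((integrable_dirac' (meas2 s2 t) 0)).smul_measure ENNReal.ofReal_ne_top)
    (((gauss_integrable2 Δ2 s2 hΔ2 hs2 t)).smul_measure ENNReal.ofReal_ne_top),
    integral_smul_measure, integral_smul_measure, integral_dirac,
    gauss_int2 Δ2 s2 hΔ2 hs2 t,
    ENNReal.toReal_ofReal hq.1.le, ENNReal.toReal_ofReal (by linarith [hq.2] : (0:ℝ) ≤ 1 - q)]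
  unfold bb
  simp
  ring

lemma bb_pos (q Δ2 s2 : ℝ) (hq : q ∈ Set.Ioo (0:ℝ) 1) (hΔ2 : 0 < Δ2) (hs2 : 0 < s2) : 0 < bb q Δ2 s2 := by
  unfold bb
  have := AA_pos Δ2 s2 hΔ2 hs2
  have := hq.2
  nlinarith

lemma Ipr_pos (q Δ2 s2 : ℝ) (hq : q ∈ Set.Ioo (0:ℝ) 1) (hΔ2 : 0 < Δ2) (hs2 : 0 < s2) (t : ℝ) : 0 < q + bb q Δ2 s2 * Real.exp (vv Δ2 s2 * t ^ 2 / 2) := by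
  have h1 := bb_pos q Δ2 s2 hq hΔ2 hs2
  have h2 := Real.exp_pos (vv Δ2 s2 * t ^ 2 / 2)
  nlinarith [hq.1]

lemma cgf_eq (q Δ2 s2 : ℝ) (hq : q ∈ Set.Ioo (0:ℝ) 1) (hΔ2 : 0 < Δ2) (hs2 : 0 < s2)
    (pr : Measure ℝ)
    (hpr : pr = ENNReal.ofReal q • MeasureTheory.Measure.dirac (0 : ℝ) +
      ENNReal.ofReal (1 - q) • ProbabilityTheory.gaussianReal 0 Δ2.toNNReal) (t : ℝ) :
    _root_.cgf pr t (1 / s2) = Real.log (q + bb q Δ2 s2 * Real.exp (vv Δ2 s2 * t ^ 2 / 2)) := by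
  unfold _root_.cgf
  rw [Ipr q Δ2 s2 hq hΔ2 hs2 pr hpr t]

lemma tiltMean_eq (q Δ2 s2 : ℝ) (hq : q ∈ Set.Ioo (0:ℝ) 1) (hΔ2 : 0 < Δ2) (hs2 : 0 < s2)
    (pr : Measure ℝ)
    (hpr : pr = ENNReal.ofReal q • MeasureTheory.Measure.dirac (0 : ℝ) +
      ENNReal.ofReal (1 - q) • ProbabilityTheory.gaussianReal 0 Δ2.toNNReal) (t : ℝ) :
    tiltMean pr t (1 / s2)
      = bb q Δ2 s2 * (vv Δ2 s2 * t) * Real.exp (vv Δ2 s2 * t ^ 2 / 2)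
        / (q + bb q Δ2 s2 * Real.exp (vv Δ2 s2 * t ^ 2 / 2)) := by
  unfold tiltMean tilt
  rw [integral_withDensity_ofReal (by fun_prop) (fun x => (Real.exp_pos _).le) _]
  have e1 : (fun x : ℝ => Real.exp (t * x - 1 / s2 / 2 * x ^ 2 - cgf pr t (1 / s2)) * x)
      = fun x : ℝ => Real.exp (- cgf pr t (1 / s2)) *
          (x * Real.exp (t * x - 1 / s2 / 2 * x ^ 2)) := by
    funext x
    rw [sub_eq_add_neg, Real.exp_add]
    ring
  rw [e1, integral_const_mul, Jpr q Δ2 s2 hq hΔ2 hs2 pr hpr t,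
    cgf_eq q Δ2 s2 hq hΔ2 hs2 pr hpr t, Real.exp_neg,
    Real.exp_log (Ipr_pos q Δ2 s2 hq hΔ2 hs2 t)]
  field_simp


end PR

end Aux

/-- for the Gaussian spike and slab prior `π = q δ_0 + (1-q) N(0, Δ²)`,
if `(1 + (2q/(1-q))√(1 + Δ²/σ²)) · Δ²/(σ² + Δ²) < 1` then
`F(u) = G(u, 1/σ²) − u²/(2σ²)` is strongly convex on `ℝ`. -/
theorem stmt12 (q : ℝ) (hq : q ∈ Set.Ioo (0 : ℝ) 1)
    (Δ2 : ℝ) (hΔ2 : 0 < Δ2) (s2 : ℝ) (hs2 : 0 < s2)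
    (pr : Measure ℝ)
    (hpr : pr = ENNReal.ofReal q • MeasureTheory.Measure.dirac (0 : ℝ) +
      ENNReal.ofReal (1 - q) • ProbabilityTheory.gaussianReal 0 Δ2.toNNReal)
    (hcond : (1 + (2 * q / (1 - q)) * Real.sqrt (1 + Δ2 / s2)) * (Δ2 / (s2 + Δ2)) < 1)
    (h : ℝ → ℝ)
    (hh : ∀ u : ℝ, tiltMean pr (h u) (1 / s2) = u) :
    ∃ κ > 0, ConvexOn ℝ Set.univ (fun u =>
      (u * h u - cgf pr (h u) (1 / s2) + cgf pr 0 (1 / s2) - u ^ 2 / (2 * s2))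
        - κ / 2 * u ^ 2) := by
  have hq0 : 0 < q := hq.1
  have hq1 : q < 1 := hq.2
  have hb : 0 < bb q Δ2 s2 := bb_pos q Δ2 s2 hq hΔ2 hs2
  have hv : 0 < vv Δ2 s2 := vv_pos Δ2 s2 hΔ2 hs2
  have hAApos : 0 < AA Δ2 s2 := AA_pos Δ2 s2 hΔ2 hs2
  set L : ℝ := vv Δ2 s2 * (1 + 2 * q / bb q Δ2 s2) with hLdef
  have hL : 0 < L := by
    rw [hLdef]
    have : 0 < 2 * q / bb q Δ2 s2 := by positivity
    nlinarith
  have hL0 : L ≠ 0 := ne_of_gt hL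
  have hs20 : s2 ≠ 0 := ne_of_gt hs2
  -- L < s2
  have hAA : AA Δ2 s2 * Real.sqrt (1 + Δ2 / s2) = 1 := by
    unfold AA
    rw [← Real.sqrt_mul (by positivity)]
    rw [show s2 / (s2 + Δ2) * (1 + Δ2 / s2) = 1 by
      field_simp]
    exact Real.sqrt_one
  have hsqrt : Real.sqrt (1 + Δ2 / s2) = 1 / AA Δ2 s2 := by
    rw [eq_div_iff (ne_of_gt hAApos)]
    linear_combination hAA
  have L_eq : L = s2 * ((1 + 2 * q / (1 - q) * Real.sqrt (1 + Δ2 / s2)) * (Δ2 / (s2 + Δ2))) := by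
    rw [hLdef, hsqrt]
    unfold vv bb
    have h1 : (1:ℝ) - q ≠ 0 := by linarith
    have h2 : s2 + Δ2 ≠ 0 := by positivity
    have h3 : AA Δ2 s2 ≠ 0 := ne_of_gt hAApos
    field_simp
  have hLs2 : L < s2 := by
    rw [L_eq]
    nlinarith [hcond, hs2]
  -- the derivative facts
  have hΨd : ∀ t, HasDerivAt (Psi q (bb q Δ2 s2) (vv Δ2 s2)) (Df q (bb q Δ2 s2) (vv Δ2 s2) t) t :=
    fun t => hasDerivAt_Psi q (bb q Δ2 s2) (vv Δ2 s2) hq0 hb t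
  have hDd : ∀ t, HasDerivAt (Df q (bb q Δ2 s2) (vv Δ2 s2)) (Sf q (bb q Δ2 s2) (vv Δ2 s2) t) t :=
    fun t => hasDerivAt_Df q (bb q Δ2 s2) (vv Δ2 s2) hq0 hb t
  have hS0 : ∀ t, 0 ≤ Sf q (bb q Δ2 s2) (vv Δ2 s2) t :=
    fun t => Sf_nonneg q (bb q Δ2 s2) (vv Δ2 s2) hq0 hb hv t
  have hSL : ∀ t, Sf q (bb q Δ2 s2) (vv Δ2 s2) t ≤ L :=
    fun t => Sf_le q (bb q Δ2 s2) (vv Δ2 s2) hq0 hb hv t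
  -- the stationarity fact
  have hh' : ∀ u, Df q (bb q Δ2 s2) (vv Δ2 s2) (h u) = u := by
    intro u
    have ht := tiltMean_eq q Δ2 s2 hq hΔ2 hs2 pr hpr (h u)
    rw [hh u] at ht
    exact ht.symm
  have hmc := main_convex hL hΨd hDd hS0 hSL h hh'
  refine ⟨1 / L - 1 / s2, ?_, ?_⟩
  · have := one_div_lt_one_div_of_lt hL hLs2
    linarith
  · have funeq : (fun u => (u * h u - cgf pr (h u) (1 / s2) + cgf pr 0 (1 / s2)
          - u ^ 2 / (2 * s2)) - (1 / L - 1 / s2) / 2 * u ^ 2)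
        = fun u => (u * h u - Psi q (bb q Δ2 s2) (vv Δ2 s2) (h u) - u ^ 2 / (2 * L))
          + Psi q (bb q Δ2 s2) (vv Δ2 s2) 0 := by
      funext u
      have hc1 : cgf pr (h u) (1 / s2)
          = Psi q (bb q Δ2 s2) (vv Δ2 s2) (h u) := cgf_eq q Δ2 s2 hq hΔ2 hs2 pr hpr (h u)
      have hc2 : cgf pr 0 (1 / s2)
          = Psi q (bb q Δ2 s2) (vv Δ2 s2) 0 := cgf_eq q Δ2 s2 hq hΔ2 hs2 pr hpr 0
      rw [hc1, hc2]
      field_simp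
      ring
    rw [funeq]
    exact hmc.add (convexOn_const _ convex_univ)
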